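/- Let q be a prime power, let ℓ_1 and ℓ_2 be two affine lines in F_q^2 with distinct directions (non-parallel), and let E = { (x, y, 0) ∈ H_1(F_q) : (x, y) ∈ ℓ_1 ∪ ℓ_2 }. Then |E| = 2q − 1, and for every refined direction ω ∈ D_1 one has M^rd 1_E(ω) ≥ 1. Consequently, for every real 1 ≤ v < ∞, ‖M^rd 1_E‖_{ℓ^v(D_1)} ≥ (q^2 + q)^{1/v}. -/

import Mathlib

/-!
`K` plays the role of the finite field `F_q` with `q = Fintype.card K` elements
(the cardinality of a finite field is automatically a prime power).
The Heisenberg group `H₁(F_q)` is identified with `K × K × K`.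
The set `D₁` of non-vertical (refined) projective directions
`{[a : b : c] ∈ P²(F_q) : (a,b) ≠ (0,0)}` is identified with `Option K × K`:
`(some m, γ)` corresponds to `[1 : m : γ]` and `(none, γ)` to `[0 : 1 : γ]`
(every element of `D₁` has a unique such normal form).
-/

noncomputable section

open Finset

/-- The point with parameter `s` of the horizontal line with refined direction
`ω ∈ D₁` indexed by `τ ∈ F_q`.  For `ω = [1 : m : γ]` the `q` horizontal lines
with `Dir L = ω` are `{(x, m x - γ, τ + γ x) : x ∈ F_q}`, `τ ∈ F_q`; for
`ω = [0 : 1 : γ]` they are `{(γ, y, τ + γ y) : y ∈ F_q}`, `τ ∈ F_q`. -/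
def lineRd {K : Type*} [Field K] (ω : Option K × K) (τ : K) (s : K) : K × K × K :=
  match ω.1 with
  | some m => (s, m * s - ω.2, τ + ω.2 * s)
  | none => (ω.2, s, τ + ω.2 * s)

/-- The refined-direction maximal function `M^rd F` on `D₁ ≃ Option K × K`:
the maximum, over the `q` horizontal lines `L` with `Dir L = ω`, of the sum of
`|F|` along `L`. -/
def Mrd {K : Type*} [Field K] [Fintype K] (Fc : K × K × K → ℂ) (ω : Option K × K) : ℝ :=
  Finset.univ.sup' ⟨(0 : K), Finset.mem_univ _⟩
    fun τ => ∑ s : K, ‖Fc (lineRd ω τ s)‖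

/-- `ℓ^r` norm of a complex-valued function on a finite set. -/
def lpNormC {X : Type*} [Fintype X] (r : ℝ) (g : X → ℂ) : ℝ :=
  (∑ x, ‖g x‖ ^ r) ^ (1 / r)

/-- `ℓ^r` norm of a real-valued function on a finite set. -/
def lpNormR {X : Type*} [Fintype X] (r : ℝ) (g : X → ℝ) : ℝ :=
  (∑ x, |g x| ^ r) ^ (1 / r)

/-- The lift to the plane `t = 0` in `H₁(F_q)` of the union of the two affine
lines `{wᵢ + s vᵢ : s ∈ F_q} ⊆ F_q²`, `i = 1, 2`. -/
def twoLinesE {K : Type*} [Field K] (w₁ v₁ w₂ v₂ : K × K) : Set (K × K × K) :=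
  { z | z.2.2 = 0 ∧
    ((∃ s : K, (z.1, z.2.1) = (w₁.1 + s * v₁.1, w₁.2 + s * v₁.2)) ∨
     (∃ s : K, (z.1, z.2.1) = (w₂.1 + s * v₂.1, w₂.2 + s * v₂.2))) }

section Aux

variable {K : Type*} [Field K]

def lineSet (w v : K × K) : Set (K × K) :=
  {z | ∃ s : K, z = (w.1 + s * v.1, w.2 + s * v.2)}

lemma lineSet_ncard [Fintype K] (w v : K × K) (hv : v ≠ 0) :
    (lineSet w v).ncard = Fintype.card K := by
  have h : lineSet w v = (fun s : K => (w.1 + s * v.1, w.2 + s * v.2)) '' Set.univ := by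
    ext z; simp [lineSet, eq_comm]
  have hv' : v.1 ≠ 0 ∨ v.2 ≠ 0 := by
    by_contra hc
    push_neg at hc
    exact hv (Prod.ext hc.1 hc.2)
  have hinj : Function.Injective (fun s : K => (w.1 + s * v.1, w.2 + s * v.2)) := by
    intro a b hab
    simp only [Prod.mk.injEq, add_right_inj] at hab
    rcases hv' with h1 | h2
    · exact mul_right_cancel₀ h1 hab.1
    · exact mul_right_cancel₀ h2 hab.2
  rw [h, Set.ncard_image_of_injective _ hinj, Set.ncard_univ, Nat.card_eq_fintype_card]

lemma lineSet_inter (w₁ v₁ w₂ v₂ : K × K)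
    (hdet : v₁.1 * v₂.2 - v₁.2 * v₂.1 ≠ 0) :
    ∃ P : K × K, lineSet w₁ v₁ ∩ lineSet w₂ v₂ = {P} := by
  set d := v₁.1 * v₂.2 - v₁.2 * v₂.1 with hd
  set s₀ : K := ((w₂.1 - w₁.1) * v₂.2 - (w₂.2 - w₁.2) * v₂.1) / d with hs₀
  set t₀ : K := ((w₂.1 - w₁.1) * v₁.2 - (w₂.2 - w₁.2) * v₁.1) / d with ht₀
  refine ⟨(w₁.1 + s₀ * v₁.1, w₁.2 + s₀ * v₁.2), ?_⟩
  ext z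
  simp only [Set.mem_inter_iff, Set.mem_singleton_iff, lineSet, Set.mem_setOf_eq]
  constructor
  · rintro ⟨⟨s, rfl⟩, ⟨t, ht⟩⟩
    simp only [Prod.mk.injEq] at ht ⊢
    have hs : s = s₀ := by
      rw [hs₀, eq_div_iff hdet, hd]
      linear_combination v₂.2 * ht.1 - v₂.1 * ht.2
    exact ⟨by rw [hs], by rw [hs]⟩
  · rintro rfl
    refine ⟨⟨s₀, rfl⟩, ⟨t₀, ?_⟩⟩
    simp only [Prod.mk.injEq, hs₀, ht₀]
    constructor <;> · field_simp; ring

lemma hit_some (m γ : K) (w v : K × K) (h : m * v.1 - v.2 ≠ 0) :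
    ∃ s t : K, ((s : K), m * s - γ) = (w.1 + t * v.1, w.2 + t * v.2) := by
  refine ⟨w.1 + ((w.2 + γ - m * w.1) / (m * v.1 - v.2)) * v.1,
    (w.2 + γ - m * w.1) / (m * v.1 - v.2), ?_⟩
  simp only [Prod.mk.injEq]
  refine ⟨trivial, ?_⟩
  field_simp
  ring

lemma hit_none (γ : K) (w v : K × K) (h : v.1 ≠ 0) :
    ∃ s t : K, ((γ : K), s) = (w.1 + t * v.1, w.2 + t * v.2) := by
  refine ⟨w.2 + ((γ - w.1) / v.1) * v.2, (γ - w.1) / v.1, ?_⟩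
  simp only [Prod.mk.injEq]
  refine ⟨?_, trivial⟩
  field_simp
  ring

end Aux

/-- If `ℓ₁, ℓ₂ ⊆ F_q²` are affine lines with distinct
directions (non-parallel, i.e. nonvanishing determinant of direction vectors)
and `E` is the lift of `ℓ₁ ∪ ℓ₂` to `t = 0`, then `|E| = 2q - 1`,
`M^rd 1_E(ω) ≥ 1` for every refined direction `ω ∈ D₁`, and consequently
`‖M^rd 1_E‖_{ℓ^v(D₁)} ≥ (q² + q)^{1/v}` for every real `1 ≤ v < ∞`. -/
theorem stmt_16 {K : Type*} [Field K] [Fintype K] (w₁ v₁ w₂ v₂ : K × K)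
    (hdet : v₁.1 * v₂.2 - v₁.2 * v₂.1 ≠ 0) :
    (twoLinesE w₁ v₁ w₂ v₂).ncard = 2 * Fintype.card K - 1 ∧
    (∀ ω : Option K × K,
      (1 : ℝ) ≤ Mrd ((twoLinesE w₁ v₁ w₂ v₂).indicator fun _ => (1 : ℂ)) ω) ∧
    ∀ v : ℝ, 1 ≤ v →
      ((Fintype.card K : ℝ) ^ 2 + Fintype.card K) ^ (1 / v) ≤
        lpNormR v (Mrd ((twoLinesE w₁ v₁ w₂ v₂).indicator fun _ => (1 : ℂ))) := by
  have hv₁ : v₁ ≠ 0 := by rintro rfl; simp at hdet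
  have hv₂ : v₂ ≠ 0 := by rintro rfl; simp at hdet
  -- Part 1
  have hE : twoLinesE w₁ v₁ w₂ v₂ =
      (fun p : K × K => (p.1, p.2, (0 : K))) '' (lineSet w₁ v₁ ∪ lineSet w₂ v₂) := by
    ext z
    constructor
    · rintro ⟨h0, h⟩
      refine ⟨(z.1, z.2.1), ?_, ?_⟩
      · simpa [lineSet, Set.mem_union] using h
      · exact Prod.ext rfl (Prod.ext rfl h0.symm)
    · rintro ⟨p, hp, rfl⟩
      refine ⟨rfl, ?_⟩
      simpa [lineSet, Set.mem_union] using hp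
  have hinj : Function.Injective (fun p : K × K => (p.1, p.2, (0 : K))) := by
    intro a b h
    simp only [Prod.mk.injEq] at h
    exact Prod.ext h.1 h.2.1
  obtain ⟨P, hP⟩ := lineSet_inter w₁ v₁ w₂ v₂ hdet
  have hcard : (twoLinesE w₁ v₁ w₂ v₂).ncard = 2 * Fintype.card K - 1 := by
    rw [hE, Set.ncard_image_of_injective _ hinj]
    have h := Set.ncard_union_add_ncard_inter (lineSet w₁ v₁) (lineSet w₂ v₂)
      (Set.toFinite _) (Set.toFinite _)
    rw [hP, Set.ncard_singleton, lineSet_ncard w₁ v₁ hv₁, lineSet_ncard w₂ v₂ hv₂] at h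
    omega
  -- Part 2
  have key : ∀ ω : Option K × K, ∃ τ s : K, lineRd ω τ s ∈ twoLinesE w₁ v₁ w₂ v₂ := by
    rintro ⟨o, γ⟩
    cases o with
    | some m =>
      have hor : m * v₁.1 - v₁.2 ≠ 0 ∨ m * v₂.1 - v₂.2 ≠ 0 := by
        by_contra hc
        push_neg at hc
        exact hdet (by linear_combination v₂.1 * hc.1 - v₁.1 * hc.2)
      rcases hor with h | h
      · obtain ⟨s, t, hst⟩ := hit_some m γ w₁ v₁ h
        exact ⟨-(γ * s), s, by
          refine ⟨neg_add_cancel _, Or.inl ⟨t, ?_⟩⟩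
          exact hst⟩
      · obtain ⟨s, t, hst⟩ := hit_some m γ w₂ v₂ h
        exact ⟨-(γ * s), s, by
          refine ⟨neg_add_cancel _, Or.inr ⟨t, ?_⟩⟩
          exact hst⟩
    | none =>
      have hor : v₁.1 ≠ 0 ∨ v₂.1 ≠ 0 := by
        by_contra hc
        push_neg at hc
        exact hdet (by rw [hc.1, hc.2]; ring)
      rcases hor with h | h
      · obtain ⟨s, t, hst⟩ := hit_none γ w₁ v₁ h
        exact ⟨-(γ * s), s, by
          refine ⟨neg_add_cancel _, Or.inl ⟨t, ?_⟩⟩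
          exact hst⟩
      · obtain ⟨s, t, hst⟩ := hit_none γ w₂ v₂ h
        exact ⟨-(γ * s), s, by
          refine ⟨neg_add_cancel _, Or.inr ⟨t, ?_⟩⟩
          exact hst⟩
  have hMrd : ∀ ω : Option K × K,
      (1 : ℝ) ≤ Mrd ((twoLinesE w₁ v₁ w₂ v₂).indicator fun _ => (1 : ℂ)) ω := by
    intro ω
    obtain ⟨τ, s, hz⟩ := key ω
    have hsum : (1 : ℝ) ≤ ∑ s' : K,
        ‖((twoLinesE w₁ v₁ w₂ v₂).indicator fun _ => (1 : ℂ)) (lineRd ω τ s')‖ := by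
      have hterm : ‖((twoLinesE w₁ v₁ w₂ v₂).indicator fun _ => (1 : ℂ))
          (lineRd ω τ s)‖ = 1 := by
        rw [Set.indicator_of_mem hz]
        simp
      calc (1 : ℝ) = _ := hterm.symm
        _ ≤ _ := Finset.single_le_sum
          (f := fun s' : K => ‖
            ((twoLinesE w₁ v₁ w₂ v₂).indicator fun _ => (1 : ℂ)) (lineRd ω τ s')‖)
          (fun i _ => norm_nonneg _) (Finset.mem_univ s)
    unfold Mrd
    exact le_trans hsum (Finset.le_sup'
      (fun τ' : K => ∑ s' : K, ‖
        ((twoLinesE w₁ v₁ w₂ v₂).indicator fun _ => (1 : ℂ)) (lineRd ω τ' s')‖)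
      (Finset.mem_univ τ))
  refine ⟨hcard, hMrd, ?_⟩
  -- Part 3
  intro v hv
  set g := Mrd ((twoLinesE w₁ v₁ w₂ v₂).indicator fun _ => (1 : ℂ)) with hg
  have hge : ∀ ω : Option K × K, (1 : ℝ) ≤ |g ω| ^ v := by
    intro ω
    have h1 : (1 : ℝ) ≤ |g ω| := le_trans (hMrd ω) (le_abs_self _)
    calc (1 : ℝ) = 1 ^ v := (Real.one_rpow v).symm
      _ ≤ |g ω| ^ v := Real.rpow_le_rpow (by norm_num) h1 (by linarith)
  have hsum : ((Fintype.card K : ℝ) ^ 2 + Fintype.card K) ≤ ∑ ω : Option K × K, |g ω| ^ v := by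
    have h := Finset.card_nsmul_le_sum Finset.univ (fun ω : Option K × K => |g ω| ^ v) 1
      (fun x _ => hge x)
    rw [Finset.card_univ] at h
    have hcard' : Fintype.card (Option K × K) = (Fintype.card K + 1) * Fintype.card K := by
      simp [Fintype.card_prod, Fintype.card_option]
    rw [hcard'] at h
    calc ((Fintype.card K : ℝ) ^ 2 + Fintype.card K)
        = ((Fintype.card K + 1) * Fintype.card K : ℕ) • (1 : ℝ) := by
          norm_cast; push_cast; ring
      _ ≤ _ := h
  rw [lpNormR]
  exact Real.rpow_le_rpow (by positivity) hsum
    (by positivity)
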